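/- arXiv:1004.1821 — 2 statements merged into one kernel-verified Lean document; each statement's English description precedes it below -/
import Mathlib

section
/- Let A be an n×N real matrix satisfying aRIP(3k; L₃, U₃) and aRIP(4k; L₄, U₄) with L₃ < 1. Let x ∈ ℝ^N be k-sparse, let e ∈ ℝⁿ, and set y = Ax + e. Let T̃ ⊆ {1,…,N} with |T̃| ≤ 3k, and let x̃ ∈ ℝ^N be the vector supported in T̃ whose restriction to T̃ equals A_{T̃}† y. Then ‖x − x̃‖₂ ≤ (1 + (L₄+U₄)/(2(1−L₃)))·‖x_{T̃^c}‖₂ + (1−L₃)^{−1/2}·‖e‖₂. -/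
open Finset Matrix

noncomputable def enormR {α : Type*} [Fintype α] (v : α → ℝ) : ℝ :=
  Real.sqrt (∑ i, (v i) ^ 2)

def restr {N : ℕ} (I : Finset (Fin N)) (x : Fin N → ℝ) : Fin N → ℝ :=
  fun i => if i ∈ I then x i else 0

def sparse {N : ℕ} (k : ℕ) (x : Fin N → ℝ) : Prop :=
  (Finset.univ.filter fun i => x i ≠ 0).card ≤ k

def aRIP {n N : ℕ} (A : Matrix (Fin n) (Fin N) ℝ) (m : ℕ) (L U : ℝ) : Prop :=
  ∀ x : Fin N → ℝ, sparse m x →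
    (1 - L) * enormR x ^ 2 ≤ enormR (A.mulVec x) ^ 2 ∧
      enormR (A.mulVec x) ^ 2 ≤ (1 + U) * enormR x ^ 2

def selects {N : ℕ} (T : Finset (Fin N)) (v : Fin N → ℝ) : Prop :=
  ∀ i ∈ T, ∀ j ∉ T, |v j| ≤ |v i|

def subCols {n N : ℕ} (A : Matrix (Fin n) (Fin N) ℝ) (I : Finset (Fin N)) :
    Matrix (Fin n) I ℝ :=
  fun r c => A r (c : Fin N)

noncomputable def gram {n N : ℕ} (A : Matrix (Fin n) (Fin N) ℝ) (I : Finset (Fin N)) :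
    Matrix I I ℝ :=
  (subCols A I)ᵀ * subCols A I

noncomputable def pinvApply {n N : ℕ} (A : Matrix (Fin n) (Fin N) ℝ) (I : Finset (Fin N))
    (y : Fin n → ℝ) : I → ℝ :=
  ((gram A I)⁻¹ * (subCols A I)ᵀ).mulVec y

noncomputable def pinvVec {n N : ℕ} (A : Matrix (Fin n) (Fin N) ℝ) (I : Finset (Fin N))
    (y : Fin n → ℝ) : Fin N → ℝ :=
  fun i => if h : i ∈ I then pinvApply A I y ⟨i, h⟩ else 0

namespace SPaux

lemma enormR_nonneg {α : Type*} [Fintype α] (v : α → ℝ) : 0 ≤ enormR v := Real.sqrt_nonneg _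

lemma enormR_sq {α : Type*} [Fintype α] (v : α → ℝ) : enormR v ^ 2 = ∑ i, v i ^ 2 :=
  Real.sq_sqrt (by positivity)

lemma enormR_eq_zero {α : Type*} [Fintype α] {v : α → ℝ} (h : enormR v = 0) : ∀ i, v i = 0 := by
  have h2 : ∑ i, v i ^ 2 = 0 := by
    rw [← enormR_sq, h]; norm_num
  intro i
  have := (Finset.sum_eq_zero_iff_of_nonneg (fun i _ => sq_nonneg (v i))).mp h2 i (mem_univ i)
  exact pow_eq_zero_iff (two_ne_zero) |>.mp this

lemma sumsq_pos {α : Type*} [Fintype α] {v : α → ℝ} (h : v ≠ 0) : 0 < ∑ i, v i ^ 2 := by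
  rcases Function.ne_iff.mp h with ⟨i, hi⟩
  have hi' : v i ≠ 0 := hi
  have : 0 < v i ^ 2 := by positivity
  exact Finset.sum_pos' (fun j _ => sq_nonneg _) ⟨i, mem_univ i, this⟩

lemma enormR_eq_norm {α : Type*} [Fintype α] (v : α → ℝ) :
    enormR v = ‖(WithLp.equiv 2 (α → ℝ)).symm v‖ := by
  rw [EuclideanSpace.norm_eq]
  unfold enormR
  congr 1
  apply Finset.sum_congr rfl
  intro i _
  simp [sq_abs]

lemma enormR_add_le {α : Type*} [Fintype α] (u v : α → ℝ) :
    enormR (fun i => u i + v i) ≤ enormR u + enormR v := by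
  rw [enormR_eq_norm, enormR_eq_norm, enormR_eq_norm]
  exact norm_add_le ((WithLp.equiv 2 (α → ℝ)).symm u) ((WithLp.equiv 2 (α → ℝ)).symm v)

lemma dot_le_enorm {α : Type*} [Fintype α] (u v : α → ℝ) :
    ∑ i, u i * v i ≤ enormR u * enormR v := by
  rw [enormR_eq_norm, enormR_eq_norm]
  have h := real_inner_le_norm ((WithLp.equiv 2 (α → ℝ)).symm u) ((WithLp.equiv 2 (α → ℝ)).symm v)
  simpa [PiLp.inner_apply, RCLike.inner_apply, starRingEnd_apply, mul_comm] using h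

lemma enormR_smul {α : Type*} [Fintype α] (c : ℝ) (v : α → ℝ) :
    enormR (fun i => c * v i) = |c| * enormR v := by
  unfold enormR
  have : ∑ i, (c * v i) ^ 2 = c ^ 2 * ∑ i, v i ^ 2 := by
    rw [Finset.mul_sum]; apply Finset.sum_congr rfl; intro i _; ring
  rw [this, Real.sqrt_mul (sq_nonneg c), Real.sqrt_sq_eq_abs]

lemma enormR_neg {α : Type*} [Fintype α] (v : α → ℝ) :
    enormR (fun i => -(v i)) = enormR v := by
  unfold enormR; congr 1; apply Finset.sum_congr rfl; intro i _; ring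

-- extension of a vector on a subtype to the full space
def extv {N : ℕ} (T : Finset (Fin N)) (w : T → ℝ) : Fin N → ℝ :=
  fun i => if h : i ∈ T then w ⟨i, h⟩ else 0

lemma sum_ext {N : ℕ} (T : Finset (Fin N)) (w : T → ℝ) (f : Fin N → ℝ → ℝ)
    (hf : ∀ j, f j 0 = 0) :
    ∑ j, f j (extv T w j) = ∑ c : T, f c (w c) := by
  have h1 : ∑ j, f j (extv T w j) = ∑ j ∈ T, f j (extv T w j) := by
    refine (Finset.sum_subset (Finset.subset_univ T) ?_).symm
    intro j _ hj
    simp [extv, hj, hf]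
  rw [h1, ← Finset.sum_attach T (fun j => f j (extv T w j)), Finset.univ_eq_attach]
  apply Finset.sum_congr rfl
  intro c _
  have hc : (c : Fin N) ∈ T := c.2
  simp [extv, hc]

lemma mulVec_ext {n N : ℕ} (A : Matrix (Fin n) (Fin N) ℝ) (T : Finset (Fin N)) (w : T → ℝ) :
    A.mulVec (extv T w) = (subCols A T).mulVec w := by
  funext r
  have := sum_ext T w (fun j t => A r j * t) (by intro j; ring)
  simpa [Matrix.mulVec, dotProduct, subCols] using this

lemma enormR_ext {N : ℕ} (T : Finset (Fin N)) (w : T → ℝ) :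
    enormR (extv T w) = enormR w := by
  unfold enormR
  congr 1
  exact sum_ext T w (fun _ t => t ^ 2) (by intro j; ring)

lemma sparse_of_subset {N m : ℕ} {v : Fin N → ℝ} {S : Finset (Fin N)}
    (h : ∀ i, v i ≠ 0 → i ∈ S) (hS : S.card ≤ m) : sparse m v := by
  refine le_trans (Finset.card_le_card ?_) hS
  intro i hi
  simp only [Finset.mem_filter] at hi
  exact h i hi.2

lemma dot_mulVec_transpose {a b : Type*} [Fintype a] [Fintype b]
    (B : Matrix a b ℝ) (w : b → ℝ) (z : a → ℝ) :
    ∑ r, B.mulVec w r * z r = ∑ c, w c * Bᵀ.mulVec z c := by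
  simp only [Matrix.mulVec, dotProduct, Finset.sum_mul, Finset.mul_sum,
    Matrix.transpose_apply]
  rw [Finset.sum_comm]
  apply Finset.sum_congr rfl; intro c _
  apply Finset.sum_congr rfl; intro r _
  ring

lemma gram_mulVec {n N : ℕ} (A : Matrix (Fin n) (Fin N) ℝ) (T : Finset (Fin N)) (u : T → ℝ) :
    (gram A T).mulVec u = (subCols A T)ᵀ.mulVec ((subCols A T).mulVec u) := by
  rw [_root_.gram, ← Matrix.mulVec_mulVec]

lemma dot_gram {n N : ℕ} (A : Matrix (Fin n) (Fin N) ℝ) (T : Finset (Fin N)) (u w : T → ℝ) :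
    ∑ c, u c * (gram A T).mulVec w c
      = ∑ r, (subCols A T).mulVec u r * (subCols A T).mulVec w r := by
  rw [gram_mulVec, ← dot_mulVec_transpose]

section Main

variable {n N k : ℕ} {A : Matrix (Fin n) (Fin N) ℝ} {L₃ U₃ : ℝ} {T : Finset (Fin N)}

/-- aRIP lower bound for vectors supported on T. -/
lemma rip_lower (h₃ : aRIP A (3 * k) L₃ U₃) (hT : T.card ≤ 3 * k) (u : T → ℝ) :
    (1 - L₃) * enormR u ^ 2 ≤ ∑ r, ((subCols A T).mulVec u r) ^ 2 := by
  have hs : sparse (3 * k) (extv T u) := by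
    refine sparse_of_subset (S := T) ?_ hT
    intro i hi
    by_contra hmem
    exact hi (by simp [extv, hmem])
  have := (h₃ _ hs).1
  rw [enormR_ext] at this
  calc (1 - L₃) * enormR u ^ 2 ≤ enormR (A.mulVec (extv T u)) ^ 2 := this
    _ = ∑ r, ((subCols A T).mulVec u r) ^ 2 := by rw [mulVec_ext, enormR_sq]

lemma gram_posdef (h₃ : aRIP A (3 * k) L₃ U₃) (hL : L₃ < 1) (hT : T.card ≤ 3 * k) :
    (gram A T).PosDef := by
  rw [Matrix.posDef_iff_dotProduct_mulVec]
  constructor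
  · show (gram A T)ᴴ = gram A T
    ext i j
    simp [_root_.gram, Matrix.conjTranspose_apply, Matrix.mul_apply, Matrix.transpose_apply,
      mul_comm]
  · intro u hu
    have h1 : star u ⬝ᵥ (gram A T) *ᵥ u = ∑ c, u c * (gram A T).mulVec u c := by
      simp [dotProduct]
    rw [h1, dot_gram]
    have h4 : ∑ r, (subCols A T).mulVec u r * (subCols A T).mulVec u r
        = ∑ r, ((subCols A T).mulVec u r) ^ 2 := by
      apply Finset.sum_congr rfl; intro r _; ring
    rw [h4]
    have h2 := rip_lower h₃ hT u
    have h3 : 0 < enormR u ^ 2 := by rw [enormR_sq]; exact sumsq_pos hu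
    nlinarith

end Main

/-- Polarization bound for vectors with disjoint supports inside a small set. -/
lemma cross_bound {n N k : ℕ} {A : Matrix (Fin n) (Fin N) ℝ} {L₄ U₄ : ℝ}
    (h₄ : aRIP A (4 * k) L₄ U₄) {p q : Fin N → ℝ} {S : Finset (Fin N)}
    (hS : S.card ≤ 4 * k) (hp : ∀ i, p i ≠ 0 → i ∈ S) (hq : ∀ i, q i ≠ 0 → i ∈ S)
    (hdisj : ∀ i, p i * q i = 0) :
    4 * ∑ r, A.mulVec p r * A.mulVec q r ≤ (L₄ + U₄) * (enormR p ^ 2 + enormR q ^ 2) := by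
  have hsp : sparse (4 * k) (fun i => p i + q i) := by
    refine sparse_of_subset (S := S) ?_ hS
    intro i hi
    by_contra hmem
    have : p i = 0 := by by_contra h; exact hmem (hp i h)
    have : q i = 0 := by by_contra h; exact hmem (hq i h)
    simp_all
  have hsm : sparse (4 * k) (fun i => p i - q i) := by
    refine sparse_of_subset (S := S) ?_ hS
    intro i hi
    by_contra hmem
    have : p i = 0 := by by_contra h; exact hmem (hp i h)
    have : q i = 0 := by by_contra h; exact hmem (hq i h)
    simp_all
  have hAp : A.mulVec (fun i => p i + q i) = fun r => A.mulVec p r + A.mulVec q r := by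
    have : (fun i => p i + q i) = p + q := rfl
    rw [this, Matrix.mulVec_add]; rfl
  have hAm : A.mulVec (fun i => p i - q i) = fun r => A.mulVec p r - A.mulVec q r := by
    have : (fun i => p i - q i) = p - q := rfl
    rw [this, Matrix.mulVec_sub]; rfl
  have h1 := (h₄ _ hsp).2
  have h2 := (h₄ _ hsm).1
  rw [enormR_sq, enormR_sq, hAp] at h1
  rw [enormR_sq, enormR_sq, hAm] at h2
  have e1 : ∑ r, (A.mulVec p r + A.mulVec q r) ^ 2
      = ∑ r, (A.mulVec p r) ^ 2 + 2 * ∑ r, A.mulVec p r * A.mulVec q r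
        + ∑ r, (A.mulVec q r) ^ 2 := by
    rw [Finset.mul_sum, ← Finset.sum_add_distrib, ← Finset.sum_add_distrib]
    apply Finset.sum_congr rfl; intro r _; ring
  have e2 : ∑ r, (A.mulVec p r - A.mulVec q r) ^ 2
      = ∑ r, (A.mulVec p r) ^ 2 - 2 * ∑ r, A.mulVec p r * A.mulVec q r
        + ∑ r, (A.mulVec q r) ^ 2 := by
    rw [Finset.mul_sum, ← Finset.sum_sub_distrib, ← Finset.sum_add_distrib]
    apply Finset.sum_congr rfl; intro r _; ring
  have e3 : ∑ i, (p i + q i) ^ 2 = ∑ i, p i ^ 2 + ∑ i, q i ^ 2 := by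
    rw [← Finset.sum_add_distrib]
    apply Finset.sum_congr rfl; intro i _
    have := hdisj i; nlinarith [hdisj i]
  have e4 : ∑ i, (p i - q i) ^ 2 = ∑ i, p i ^ 2 + ∑ i, q i ^ 2 := by
    rw [← Finset.sum_add_distrib]
    apply Finset.sum_congr rfl; intro i _
    nlinarith [hdisj i]
  rw [e1, e3] at h1
  rw [e2, e4] at h2
  rw [enormR_sq, enormR_sq]
  linarith

lemma cross_ip {n N k : ℕ} {A : Matrix (Fin n) (Fin N) ℝ} {L₄ U₄ : ℝ}
    (hL₄0 : 0 ≤ L₄) (hU₄0 : 0 ≤ U₄)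
    (h₄ : aRIP A (4 * k) L₄ U₄) {p q : Fin N → ℝ} {S : Finset (Fin N)}
    (hS : S.card ≤ 4 * k) (hp : ∀ i, p i ≠ 0 → i ∈ S) (hq : ∀ i, q i ≠ 0 → i ∈ S)
    (hdisj : ∀ i, p i * q i = 0) :
    ∑ r, A.mulVec p r * A.mulVec q r ≤ ((L₄ + U₄) / 2) * (enormR p * enormR q) := by
  set a := enormR p with ha
  set b := enormR q with hb
  have ha0 : 0 ≤ a := enormR_nonneg p
  have hb0 : 0 ≤ b := enormR_nonneg q
  by_cases hza : a = 0
  · have hp0 : ∀ i, p i = 0 := enormR_eq_zero hza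
    have : A.mulVec p = 0 := by
      funext r; simp [Matrix.mulVec, dotProduct, hp0]
    rw [hza]
    simp [this]
  by_cases hzb : b = 0
  · have hq0 : ∀ i, q i = 0 := enormR_eq_zero hzb
    have : A.mulVec q = 0 := by
      funext r; simp [Matrix.mulVec, dotProduct, hq0]
    rw [hzb]
    simp [this]
  have ha' : 0 < a := lt_of_le_of_ne ha0 (Ne.symm hza)
  have hb' : 0 < b := lt_of_le_of_ne hb0 (Ne.symm hzb)
  -- apply cross_bound to scaled vectors
  set p' : Fin N → ℝ := fun i => b * p i with hp'
  set q' : Fin N → ℝ := fun i => a * q i with hq'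
  have hp'S : ∀ i, p' i ≠ 0 → i ∈ S := by
    intro i hi; apply hp; intro h; apply hi; simp [hp', h]
  have hq'S : ∀ i, q' i ≠ 0 → i ∈ S := by
    intro i hi; apply hq; intro h; apply hi; simp [hq', h]
  have hdisj' : ∀ i, p' i * q' i = 0 := by
    intro i
    simp only [hp', hq']
    have h : b * p i * (a * q i) = a * b * (p i * q i) := by ring
    rw [h, hdisj i, mul_zero]
  have key := cross_bound h₄ hS hp'S hq'S hdisj'
  have hep : enormR p' = b * a := by
    rw [hp', enormR_smul, abs_of_nonneg hb0]
  have heq : enormR q' = a * b := by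
    rw [hq', enormR_smul, abs_of_nonneg ha0]
  have hmul : ∀ r, A.mulVec p' r * A.mulVec q' r = (a * b) * (A.mulVec p r * A.mulVec q r) := by
    intro r
    have h1 : A.mulVec p' r = b * A.mulVec p r := by
      simp only [hp', Matrix.mulVec, dotProduct, Finset.mul_sum]
      apply Finset.sum_congr rfl; intro j _; ring
    have h2 : A.mulVec q' r = a * A.mulVec q r := by
      simp only [hq', Matrix.mulVec, dotProduct, Finset.mul_sum]
      apply Finset.sum_congr rfl; intro j _; ring
    rw [h1, h2]; ring
  have hsum : ∑ r, A.mulVec p' r * A.mulVec q' r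
      = (a * b) * ∑ r, A.mulVec p r * A.mulVec q r := by
    rw [Finset.mul_sum]; exact Finset.sum_congr rfl (fun r _ => hmul r)
  rw [hsum, hep, heq] at key
  have hab : 0 < a * b := mul_pos ha' hb'
  nlinarith [key]

lemma div_helper1 {a c d : ℝ} (ha : 0 ≤ a) (hc : 0 < c) (hd : 0 ≤ d)
    (h : c * a ^ 2 ≤ d * a) : a ≤ d / c := by
  rcases eq_or_lt_of_le ha with h0 | h0
  · rw [← h0]; positivity
  · have : c * a ≤ d := by nlinarith
    rw [le_div_iff₀ hc]; nlinarith

lemma div_helper2 {a b c : ℝ} (ha : 0 ≤ a) (hb : 0 ≤ b) (hc : 0 < c)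
    (h : c * a ^ 2 ≤ b ^ 2) : a ≤ (Real.sqrt c)⁻¹ * b := by
  have hs : 0 < Real.sqrt c := Real.sqrt_pos.mpr hc
  rw [← Real.sqrt_sq ha, ← Real.sqrt_sq hb, ← Real.sqrt_inv, ← Real.sqrt_mul (by positivity)]
  apply Real.sqrt_le_sqrt
  rw [inv_mul_eq_div, le_div_iff₀ hc]
  nlinarith

end SPaux

open SPaux in
theorem stmt11 {n N k : ℕ} (A : Matrix (Fin n) (Fin N) ℝ)
    (L₃ U₃ L₄ U₄ : ℝ) (hL₃0 : 0 ≤ L₃) (hU₃0 : 0 ≤ U₃) (hL₄0 : 0 ≤ L₄) (hU₄0 : 0 ≤ U₄)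
    (h₃ : aRIP A (3 * k) L₃ U₃) (h₄ : aRIP A (4 * k) L₄ U₄) (hL₃1 : L₃ < 1)
    (x : Fin N → ℝ) (hx : sparse k x) (e y : Fin n → ℝ)
    (hy : y = fun i => A.mulVec x i + e i)
    (Tt : Finset (Fin N)) (hTt : Tt.card ≤ 3 * k)
    (xt : Fin N → ℝ) (hxt : xt = pinvVec A Tt y) :
    enormR (fun i => x i - xt i) ≤
      (1 + (L₄ + U₄) / (2 * (1 - L₃))) * enormR (restr Ttᶜ x)
        + (Real.sqrt (1 - L₃))⁻¹ * enormR e := by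
  classical
  have hL : 0 < 1 - L₃ := by linarith
  set T := Tt with hT
  set B := subCols A T with hB
  set g := gram A T with hg
  -- invertibility of the Gram matrix
  have hpd : g.PosDef := gram_posdef h₃ hL₃1 hTt
  have hdet : IsUnit g.det := isUnit_iff_ne_zero.mpr (ne_of_gt hpd.det_pos)
  have hginv : g⁻¹ * g = 1 := Matrix.nonsing_inv_mul g hdet
  have hginv' : g * g⁻¹ = 1 := Matrix.mul_nonsing_inv g hdet
  -- notation
  set v : Fin N → ℝ := restr Tᶜ x with hv
  set z : Fin n → ℝ := fun r => A.mulVec v r + e r with hz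
  set xT : T → ℝ := fun c => x c with hxT
  -- decomposition of x
  have hxdec : x = fun i => extv T xT i + v i := by
    funext i
    by_cases hi : i ∈ T <;> simp [extv, hv, restr, hi, hxT]
  -- y = B xT + z
  have hy2 : y = fun r => B.mulVec xT r + z r := by
    rw [hy]
    funext r
    have : A.mulVec x = fun r => A.mulVec (extv T xT) r + A.mulVec v r := by
      conv_lhs => rw [hxdec]
      have : (fun i => extv T xT i + v i) = extv T xT + v := rfl
      rw [this, Matrix.mulVec_add]; rfl
    rw [this, mulVec_ext, ← hB, hz]
    ring
  -- the least squares solution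
  set h1 : T → ℝ := (g⁻¹ * Bᵀ).mulVec (A.mulVec v) with hh1
  set h2 : T → ℝ := (g⁻¹ * Bᵀ).mulVec e with hh2
  have hw : pinvApply A T y = fun c => xT c + (h1 c + h2 c) := by
    unfold pinvApply
    rw [← hg, ← hB, hy2]
    have hyadd : (fun r => B.mulVec xT r + z r) = B.mulVec xT + z := rfl
    rw [hyadd, Matrix.mulVec_add]
    have hzadd : z = A.mulVec v + e := rfl
    rw [hzadd, Matrix.mulVec_add]
    have hfirst : (g⁻¹ * Bᵀ).mulVec (B.mulVec xT) = xT := by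
      rw [Matrix.mulVec_mulVec, Matrix.mul_assoc, ← Matrix.mulVec_mulVec,
        ← Matrix.mulVec_mulVec]
      have : Bᵀ.mulVec (B.mulVec xT) = g.mulVec xT := by
        rw [Matrix.mulVec_mulVec]; rfl
      rw [this, Matrix.mulVec_mulVec, hginv, Matrix.one_mulVec]
    rw [hfirst, ← hh1, ← hh2]
    rfl
  -- pointwise formula for x - xt
  have hdiff : (fun i => x i - xt i) = fun i => v i + (-(extv T (fun c => h1 c + h2 c) i)) := by
    funext i
    rw [hxt]
    unfold pinvVec
    rw [hw]
    by_cases hi : i ∈ T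
    · simp only [hi, dif_pos, extv, hv, restr, Finset.mem_compl, hi, not_true, if_neg,
        hxT]
      simp [hi]
    · simp only [hi, dif_neg, extv, hv, restr, Finset.mem_compl, hi, not_false_iff, if_pos]
      simp [hi]
  -- triangle inequality
  have tri1 : enormR (fun i => x i - xt i) ≤ enormR v + enormR (extv T fun c => h1 c + h2 c) := by
    rw [hdiff]
    have := enormR_add_le v (fun i => -(extv T (fun c => h1 c + h2 c) i))
    rwa [enormR_neg] at this
  have tri2 : enormR (extv T fun c => h1 c + h2 c) ≤ enormR h1 + enormR h2 := by
    rw [enormR_ext]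
    exact enormR_add_le h1 h2
  -- support of v
  have hvS : ∀ i, v i ≠ 0 → i ∈ Finset.univ.filter (fun i => x i ≠ 0) := by
    intro i hi
    simp only [Finset.mem_filter, Finset.mem_univ, true_and]
    intro hxi
    exact hi (by simp [hv, restr, hxi])
  -- bound on h1 (cross term)
  have hgh1 : g.mulVec h1 = Bᵀ.mulVec (A.mulVec v) := by
    rw [hh1, Matrix.mulVec_mulVec, ← Matrix.mul_assoc, hginv', Matrix.one_mul]
  have hbh1 : enormR h1 ≤ ((L₄ + U₄) / (2 * (1 - L₃))) * enormR v := by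
    have key : (1 - L₃) * enormR h1 ^ 2 ≤ ∑ r, B.mulVec h1 r ^ 2 := rip_lower h₃ hTt h1
    have e1 : ∑ r, B.mulVec h1 r ^ 2 = ∑ c, h1 c * g.mulVec h1 c := by
      rw [hg, dot_gram, ← hB]
      apply Finset.sum_congr rfl; intro r _; ring
    have e2 : ∑ c, h1 c * g.mulVec h1 c = ∑ r, B.mulVec h1 r * A.mulVec v r := by
      rw [hgh1, ← dot_mulVec_transpose]
    have e3 : ∑ r, B.mulVec h1 r * A.mulVec v r
        = ∑ r, A.mulVec (extv T h1) r * A.mulVec v r := by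
      rw [mulVec_ext, ← hB]
    -- cross inner product bound
    have hcard : (T ∪ Finset.univ.filter (fun i => x i ≠ 0)).card ≤ 4 * k := by
      calc (T ∪ Finset.univ.filter (fun i => x i ≠ 0)).card
          ≤ T.card + (Finset.univ.filter (fun i => x i ≠ 0)).card := Finset.card_union_le _ _
        _ ≤ 3 * k + k := add_le_add hTt hx
        _ = 4 * k := by ring
    have hpmem : ∀ i, extv T h1 i ≠ 0 → i ∈ T ∪ Finset.univ.filter (fun i => x i ≠ 0) := by
      intro i hi
      apply Finset.mem_union_left
      by_contra hmem
      exact hi (by simp [extv, hmem])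
    have hqmem : ∀ i, v i ≠ 0 → i ∈ T ∪ Finset.univ.filter (fun i => x i ≠ 0) := by
      intro i hi
      exact Finset.mem_union_right _ (hvS i hi)
    have hdisj : ∀ i, extv T h1 i * v i = 0 := by
      intro i
      by_cases hi : i ∈ T
      · have : v i = 0 := by simp [hv, restr, hi]
        rw [this, mul_zero]
      · have : extv T h1 i = 0 := by simp [extv, hi]
        rw [this, zero_mul]
    have hcross := cross_ip hL₄0 hU₄0 h₄ hcard hpmem hqmem hdisj
    rw [enormR_ext] at hcross
    have : (1 - L₃) * enormR h1 ^ 2 ≤ ((L₄ + U₄) / 2) * (enormR h1 * enormR v) := by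
      calc (1 - L₃) * enormR h1 ^ 2 ≤ ∑ r, B.mulVec h1 r ^ 2 := key
        _ = ∑ r, A.mulVec (extv T h1) r * A.mulVec v r := by rw [e1, e2, e3]
        _ ≤ ((L₄ + U₄) / 2) * (enormR h1 * enormR v) := hcross
    have hres := div_helper1 (a := enormR h1) (c := 1 - L₃)
      (d := (L₄ + U₄) / 2 * enormR v) (enormR_nonneg h1) hL
      (mul_nonneg (by positivity) (enormR_nonneg v)) (by nlinarith)
    calc enormR h1 ≤ ((L₄ + U₄) / 2 * enormR v) / (1 - L₃) := hres
      _ = ((L₄ + U₄) / (2 * (1 - L₃))) * enormR v := by field_simp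
  -- bound on h2 (noise term)
  have hgh2 : g.mulVec h2 = Bᵀ.mulVec e := by
    rw [hh2, Matrix.mulVec_mulVec, ← Matrix.mul_assoc, hginv', Matrix.one_mul]
  have hbh2 : enormR h2 ≤ (Real.sqrt (1 - L₃))⁻¹ * enormR e := by
    have key : (1 - L₃) * enormR h2 ^ 2 ≤ ∑ r, B.mulVec h2 r ^ 2 := rip_lower h₃ hTt h2
    have e1 : ∑ r, B.mulVec h2 r ^ 2 = ∑ c, h2 c * g.mulVec h2 c := by
      rw [hg, dot_gram, ← hB]
      apply Finset.sum_congr rfl; intro r _; ring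
    have e2 : ∑ c, h2 c * g.mulVec h2 c = ∑ r, B.mulVec h2 r * e r := by
      rw [hgh2, ← dot_mulVec_transpose]
    have hcs : ∑ r, B.mulVec h2 r * e r ≤ enormR (B.mulVec h2) * enormR e :=
      dot_le_enorm _ _
    have ht2 : enormR (B.mulVec h2) ^ 2 = ∑ r, B.mulVec h2 r ^ 2 := enormR_sq _
    have htle : enormR (B.mulVec h2) ≤ enormR e := by
      have h0 : enormR (B.mulVec h2) ^ 2 ≤ enormR (B.mulVec h2) * enormR e := by
        calc enormR (B.mulVec h2) ^ 2 = ∑ r, B.mulVec h2 r ^ 2 := ht2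
          _ = ∑ c, h2 c * g.mulVec h2 c := e1
          _ = ∑ r, B.mulVec h2 r * e r := e2
          _ ≤ enormR (B.mulVec h2) * enormR e := hcs
      nlinarith [enormR_nonneg (B.mulVec h2), enormR_nonneg e]
    have hfin : (1 - L₃) * enormR h2 ^ 2 ≤ enormR e ^ 2 := by
      have : ∑ r, B.mulVec h2 r ^ 2 ≤ enormR e ^ 2 := by
        rw [← ht2]
        have := enormR_nonneg (B.mulVec h2)
        nlinarith
      linarith
    exact div_helper2 (enormR_nonneg h2) (enormR_nonneg e) hL hfin
  -- combine
  have hvpos : 0 ≤ enormR v := enormR_nonneg v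
  calc enormR (fun i => x i - xt i)
      ≤ enormR v + enormR (extv T fun c => h1 c + h2 c) := tri1
    _ ≤ enormR v + (enormR h1 + enormR h2) := by linarith
    _ ≤ enormR v + (((L₄ + U₄) / (2 * (1 - L₃))) * enormR v
          + (Real.sqrt (1 - L₃))⁻¹ * enormR e) := by linarith
    _ = (1 + (L₄ + U₄) / (2 * (1 - L₃))) * enormR v
          + (Real.sqrt (1 - L₃))⁻¹ * enormR e := by ring
end

section
/- (CoSaMP error bound.) Let A be an n×N real matrix satisfying aRIP(2k; L₂, U₂), aRIP(3k; L₃, U₃), and aRIP(4k; L₄, U₄) with L₂ < 1 and L₃ < 1. Define μ := (1/2)·(2 + (L₄+U₄)/(1−L₃))·((L₂+U₂+L₄+U₄)/(1−L₂)) and ξ := 2·[(2 + (L₄+U₄)/(1−L₃))·(√(1+U₂)/(1−L₂)) + (1−L₃)^{−1/2}], and assume μ < 1. Let x ∈ ℝ^N be k-sparse, let e ∈ ℝⁿ, and set y = Ax + e. Consider any CoSaMP trajectory: v⁰ := 0, and for each l ≥ 1: Ω^l is an index set with |Ω^l| = 2k selecting 2k largest-magnitude entries of A*(y − A v^{l−1});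 T̃^l := supp(v^{l−1}) ∪ Ω^l; x̃^l ∈ ℝ^N is the vector supported in T̃^l whose restriction to T̃^l equals A_{T̃^l}† y; T^l is an index set with |T^l| = k selecting k largest-magnitude entries of x̃^l; and v^l := (x̃^l)_{T^l}. Then for every l ≥ 0, ‖x − v^l‖₂ ≤ μ^l·‖x‖₂ + (ξ/(1−μ))·‖e‖₂. -/
open Finset Matrix

-- ################ helper section ################

section helpers

variable {α : Type*} [Fintype α]

lemma enormR_nonneg (v : α → ℝ) : 0 ≤ enormR v := Real.sqrt_nonneg _

lemma enormR_sq (v : α → ℝ) : enormR v ^ 2 = ∑ i, (v i) ^ 2 :=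
  Real.sq_sqrt (Finset.sum_nonneg fun i _ => sq_nonneg _)

lemma enormR_sq_eq_dot (v : α → ℝ) : enormR v ^ 2 = v ⬝ᵥ v := by
  rw [enormR_sq]; simp [dotProduct, sq]

lemma enormR_eq_zero {v : α → ℝ} (h : enormR v = 0) : v = 0 := by
  have h2 : ∑ i, (v i)^2 = 0 := by
    have := enormR_sq v; rw [h] at this; linarith [this]
  funext i
  have := (Finset.sum_eq_zero_iff_of_nonneg (fun i _ => sq_nonneg (v i))).1 h2 i (Finset.mem_univ i)
  exact pow_eq_zero_iff (by norm_num) |>.1 this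

lemma enormR_zero : enormR (0 : α → ℝ) = 0 := by simp [enormR]

lemma dotp_le_enorm (u w : α → ℝ) : u ⬝ᵥ w ≤ enormR u * enormR w := by
  have h := sum_mul_sq_le_sq_mul_sq Finset.univ u w
  have h1 : u ⬝ᵥ w ≤ |∑ i, u i * w i| := le_abs_self _
  calc u ⬝ᵥ w ≤ |∑ i, u i * w i| := h1
    _ = Real.sqrt ((∑ i, u i * w i)^2) := (Real.sqrt_sq_eq_abs _).symm
    _ ≤ Real.sqrt ((∑ i, u i ^2) * ∑ i, w i ^2) := Real.sqrt_le_sqrt h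
    _ = enormR u * enormR w := by
        rw [Real.sqrt_mul (Finset.sum_nonneg fun i _ => sq_nonneg _)]; rfl

lemma abs_dotp_le_enorm (u w : α → ℝ) : |u ⬝ᵥ w| ≤ enormR u * enormR w := by
  rcases abs_cases (u ⬝ᵥ w) with ⟨h, _⟩ | ⟨h, _⟩
  · rw [h]; exact dotp_le_enorm u w
  · rw [h]
    have := dotp_le_enorm (-u) w
    simpa [enormR, neg_sq] using this

lemma enormR_add_le (u w : α → ℝ) : enormR (u + w) ≤ enormR u + enormR w := by
  have h : enormR (u+w) ^ 2 ≤ (enormR u + enormR w)^2 := by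
    rw [enormR_sq]
    have : ∑ i, (u i + w i)^2 = (∑ i, u i^2) + 2 * (u ⬝ᵥ w) + ∑ i, w i ^2 := by
      simp only [dotProduct, Finset.mul_sum, ← Finset.sum_add_distrib]
      apply Finset.sum_congr rfl; intro i _; ring
    show ∑ i, ((u + w) i)^2 ≤ _
    simp only [Pi.add_apply]
    rw [this, add_sq, ← enormR_sq, ← enormR_sq]
    have := dotp_le_enorm u w
    nlinarith
  have h2 := abs_le_abs (a := enormR (u+w)) (b := enormR u + enormR w)
  nlinarith [enormR_nonneg (u+w), enormR_nonneg u, enormR_nonneg w]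

lemma enormR_smul (c : ℝ) (u : α → ℝ) : enormR (c • u) = |c| * enormR u := by
  unfold enormR
  rw [← Real.sqrt_sq_eq_abs, ← Real.sqrt_mul (sq_nonneg c), Finset.mul_sum]
  congr 1; apply Finset.sum_congr rfl; intro i _; simp [mul_pow]

lemma enormR_neg (u : α → ℝ) : enormR (-u) = enormR u := by
  simp [enormR]

lemma enormR_sub_le (u w : α → ℝ) : enormR (u - w) ≤ enormR u + enormR w := by
  have := enormR_add_le u (-w)
  simpa [enormR_neg, sub_eq_add_neg] using this

end helpers


lemma enormR_nonneg' {α : Type*} [Fintype α] (v : α → ℝ) : 0 ≤ enormR v := Real.sqrt_nonneg _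

section restr
variable {N : ℕ}

def coRestr (I : Finset (Fin N)) (x : Fin N → ℝ) : Fin N → ℝ :=
  fun i => if i ∈ I then 0 else x i

noncomputable def supp (x : Fin N → ℝ) : Finset (Fin N) := Finset.univ.filter fun i => x i ≠ 0

lemma mem_supp {x : Fin N → ℝ} {i : Fin N} : i ∈ supp x ↔ x i ≠ 0 := by
  simp [supp]

lemma sparse_iff {m : ℕ} {x : Fin N → ℝ} : sparse m x ↔ (supp x).card ≤ m := Iff.rfl

lemma supp_zero_outside {x : Fin N → ℝ} {i : Fin N} (h : i ∉ supp x) : x i = 0 := by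
  by_contra hne; exact h (mem_supp.2 hne)

lemma restr_add_coRestr (I : Finset (Fin N)) (x : Fin N → ℝ) :
    restr I x + coRestr I x = x := by
  funext i; by_cases h : i ∈ I <;> simp [restr, coRestr, h]

lemma supp_restr (I : Finset (Fin N)) (x : Fin N → ℝ) : supp (restr I x) ⊆ I := by
  intro i hi; rw [mem_supp] at hi; by_contra h; exact hi (by simp [restr, h])

lemma supp_restr' (I : Finset (Fin N)) (x : Fin N → ℝ) : supp (restr I x) ⊆ supp x := by
  intro i hi; rw [mem_supp] at hi ⊢; intro h; exact hi (by simp [restr, h])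

lemma supp_coRestr (I : Finset (Fin N)) (x : Fin N → ℝ) :
    supp (coRestr I x) ⊆ supp x \ I := by
  intro i hi; rw [mem_supp] at hi
  by_cases h : i ∈ I
  · exact absurd (by simp [coRestr, h]) hi
  · simp only [coRestr, if_neg h] at hi
    exact Finset.mem_sdiff.2 ⟨mem_supp.2 hi, h⟩

lemma supp_sub (x v : Fin N → ℝ) : supp (x - v) ⊆ supp x ∪ supp v := by
  intro i hi; rw [mem_supp] at hi
  by_contra h
  simp only [Finset.mem_union, mem_supp, not_or, not_not] at h
  exact hi (by simp [Pi.sub_apply, h.1, h.2])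

/-- sum of squares over a restriction -/
lemma enormR_sq_restr (I : Finset (Fin N)) (x : Fin N → ℝ) :
    enormR (restr I x) ^ 2 = ∑ i ∈ I, (x i) ^ 2 := by
  rw [enormR_sq]
  rw [← Finset.sum_filter_add_sum_filter_not Finset.univ (· ∈ I)]
  have h1 : ∑ i ∈ Finset.univ.filter (· ∈ I), (restr I x i)^2 = ∑ i ∈ I, (x i)^2 := by
    refine Finset.sum_congr (by ext i; simp) fun i hi => by simp [restr, hi]
  have h2 : ∑ i ∈ Finset.univ.filter (¬ · ∈ I), (restr I x i)^2 = 0 := by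
    apply Finset.sum_eq_zero; intro i hi
    rw [Finset.mem_filter] at hi; simp [restr, hi.2]
  rw [h1, h2, add_zero]

lemma enormR_sq_coRestr (I : Finset (Fin N)) (x : Fin N → ℝ) :
    enormR (coRestr I x) ^ 2 = ∑ i ∈ Iᶜ, (x i) ^ 2 := by
  have : coRestr I x = restr Iᶜ x := by
    funext i; by_cases h : i ∈ I <;> simp [coRestr, restr, h]
  rw [this, enormR_sq_restr]

lemma pyth (I : Finset (Fin N)) (x : Fin N → ℝ) :
    enormR x ^ 2 = enormR (restr I x) ^ 2 + enormR (coRestr I x) ^ 2 := by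
  rw [enormR_sq, enormR_sq_restr, enormR_sq_coRestr]
  exact (Finset.sum_add_sum_compl I _).symm

lemma enormR_restr_le (I : Finset (Fin N)) (x : Fin N → ℝ) :
    enormR (restr I x) ≤ enormR x := by
  have := pyth I x
  have h1 := enormR_sq_coRestr I x
  have : enormR (restr I x)^2 ≤ enormR x ^2 := by nlinarith [Finset.sum_nonneg (fun i (_ : i ∈ Iᶜ) => sq_nonneg (x i))]
  nlinarith [enormR_nonneg' (restr I x), enormR_nonneg' x]

lemma enormR_coRestr_le (I : Finset (Fin N)) (x : Fin N → ℝ) :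
    enormR (coRestr I x) ≤ enormR x := by
  have := pyth I x
  nlinarith [enormR_nonneg' (coRestr I x), enormR_nonneg' x, sq_nonneg (enormR (restr I x)), enormR_nonneg' x]

lemma enormR_restr_mono {I J : Finset (Fin N)} (h : I ⊆ J) (x : Fin N → ℝ) :
    enormR (restr I x) ≤ enormR (restr J x) := by
  have h1 : enormR (restr I x)^2 ≤ enormR (restr J x)^2 := by
    rw [enormR_sq_restr, enormR_sq_restr]
    exact Finset.sum_le_sum_of_subset_of_nonneg h fun i _ _ => sq_nonneg _
  nlinarith [enormR_nonneg' (restr I x), enormR_nonneg' (restr J x)]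

lemma enormR_coRestr_mono {I J : Finset (Fin N)} (h : I ⊆ J) (x : Fin N → ℝ) :
    enormR (coRestr J x) ≤ enormR (coRestr I x) := by
  have h1 : enormR (coRestr J x)^2 ≤ enormR (coRestr I x)^2 := by
    rw [enormR_sq_coRestr, enormR_sq_coRestr]
    exact Finset.sum_le_sum_of_subset_of_nonneg (Finset.compl_subset_compl.2 h) fun i _ _ => sq_nonneg _
  nlinarith [enormR_nonneg' (coRestr J x), enormR_nonneg' (coRestr I x)]

/-- restriction to a subset of the support of x equals restr of supp-pieces; if x vanishes
outside S, restr of complement pieces -/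
lemma restr_eq_of_supp_subset {I : Finset (Fin N)} {x : Fin N → ℝ} (h : supp x ⊆ I) :
    restr I x = x := by
  funext i; by_cases hi : i ∈ I
  · simp [restr, hi]
  · simp only [restr, if_neg hi]
    exact (supp_zero_outside (fun hs => hi (h hs))).symm

/-- the selection swap lemma -/
lemma selects_swap {T P Q : Finset (Fin N)} {u : Fin N → ℝ}
    (hsel : selects T u) (hP : Disjoint P T) (hQ : Q ⊆ T) (hcard : P.card ≤ Q.card) :
    enormR (restr P u) ≤ enormR (restr Q u) := by
  obtain ⟨Q', hQ'sub, hQ'card⟩ := Finset.exists_subset_card_eq hcard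
  have ecard : Fintype.card P = Fintype.card Q' := by
    simp [Fintype.card_coe, hQ'card]
  let e : (P : Type) ≃ (Q' : Type) := Fintype.equivOfCardEq ecard
  have key : ∑ i ∈ P, (u i)^2 ≤ ∑ i ∈ Q', (u i)^2 := by
    rw [← Finset.sum_coe_sort P, ← Finset.sum_coe_sort Q']
    rw [← Equiv.sum_comp e (fun j : (Q' : Type) => (u (j : Fin N))^2)]
    apply Finset.sum_le_sum
    intro i _
    have hiP : (i : Fin N) ∉ T := Finset.disjoint_left.1 hP i.2
    have hiQ : ((e i : Fin N)) ∈ T := hQ (hQ'sub (e i).2)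
    have := hsel _ hiQ _ hiP
    calc (u i)^2 = |u i|^2 := (sq_abs _).symm
      _ ≤ |u (e i)|^2 := by nlinarith [abs_nonneg (u (i:Fin N)), abs_nonneg (u ((e i : Fin N)))]
      _ = (u (e i))^2 := sq_abs _
  have h2 : enormR (restr P u) ^2 ≤ enormR (restr Q u)^2 := by
    rw [enormR_sq_restr, enormR_sq_restr]
    exact key.trans (Finset.sum_le_sum_of_subset_of_nonneg hQ'sub fun i _ _ => sq_nonneg _)
  nlinarith [enormR_nonneg' (restr P u), enormR_nonneg' (restr Q u)]

end restr

lemma le_of_sq_le_sq' {x y : ℝ} (hx : 0 ≤ x) (hy : 0 ≤ y) (h : x^2 ≤ y^2) : x ≤ y := by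
  rw [← Real.sqrt_sq hx, ← Real.sqrt_sq hy]; exact Real.sqrt_le_sqrt h

-- ########## RIP consequences ##########
section rip
variable {n N : ℕ} {A : Matrix (Fin n) (Fin N) ℝ}

lemma adjoint_dot (A : Matrix (Fin n) (Fin N) ℝ) (w : Fin N → ℝ) (z : Fin n → ℝ) :
    (A.mulVec w) ⬝ᵥ z = w ⬝ᵥ (Aᵀ.mulVec z) := by
  rw [Matrix.mulVec_transpose]
  rw [dotProduct_comm, Matrix.dotProduct_mulVec, dotProduct_comm]

lemma rip_upper {m : ℕ} {L U : ℝ} (hU : 0 ≤ U) (h : aRIP A m L U) {w : Fin N → ℝ}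
    (hw : sparse m w) : enormR (A.mulVec w) ≤ Real.sqrt (1 + U) * enormR w := by
  have h2 := (h w hw).2
  have hsq : enormR (A.mulVec w) ^2 ≤ (Real.sqrt (1+U) * enormR w)^2 := by
    rw [mul_pow, Real.sq_sqrt (by linarith : (0:ℝ) ≤ 1 + U)]
    exact h2
  exact le_of_sq_le_sq' (enormR_nonneg' _) (mul_nonneg (Real.sqrt_nonneg _) (enormR_nonneg' _)) hsq

lemma rip_lower {m : ℕ} {L U : ℝ} (hL : L < 1) (h : aRIP A m L U) {w : Fin N → ℝ}
    (hw : sparse m w) : Real.sqrt (1 - L) * enormR w ≤ enormR (A.mulVec w) := by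
  have h2 := (h w hw).1
  have hsq : (Real.sqrt (1-L) * enormR w)^2 ≤ enormR (A.mulVec w) ^2 := by
    rw [mul_pow, Real.sq_sqrt (by linarith : (0:ℝ) ≤ 1 - L)]
    exact h2
  exact le_of_sq_le_sq' (mul_nonneg (Real.sqrt_nonneg _) (enormR_nonneg' _)) (enormR_nonneg' _) hsq

lemma dotp_disjoint_supp {u w : Fin N → ℝ} (h : Disjoint (supp u) (supp w)) :
    u ⬝ᵥ w = 0 := by
  apply Finset.sum_eq_zero
  intro i _
  by_cases hu : i ∈ supp u
  · have hw : i ∉ supp w := Finset.disjoint_left.1 h hu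
    rw [supp_zero_outside hw, mul_zero]
  · rw [supp_zero_outside hu, zero_mul]

/-- key lemma: inner products of images of disjointly supported vectors -/
lemma rip_disjoint_dot {m : ℕ} {L U : ℝ} (h : aRIP A m L U)
    {u w : Fin N → ℝ} (hdisj : Disjoint (supp u) (supp w))
    (hcard : (supp u).card + (supp w).card ≤ m) :
    |(A.mulVec u) ⬝ᵥ (A.mulVec w)| ≤ ((L + U) / 2) * enormR u * enormR w := by
  -- reduce to nonzero case
  by_cases hu0 : u = 0
  · subst hu0; simp [Matrix.mulVec_zero, enormR]
  by_cases hw0 : w = 0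
  · subst hw0; simp [Matrix.mulVec_zero, enormR]
  set a := enormR u with ha
  set b := enormR w with hb
  have ha0 : 0 < a := lt_of_le_of_ne (enormR_nonneg' u) (fun hc => hu0 (enormR_eq_zero hc.symm))
  have hb0 : 0 < b := lt_of_le_of_ne (enormR_nonneg' w) (fun hc => hw0 (enormR_eq_zero hc.symm))
  set s := b • u + a • w with hs
  set d := b • u - a • w with hd
  have hsupp_smul : ∀ (c : ℝ) (v : Fin N → ℝ), supp (c • v) ⊆ supp v := by
    intro c v i hi
    rw [mem_supp] at hi ⊢
    intro hvi; exact hi (by simp [hvi])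
  have hss : supp s ⊆ supp u ∪ supp w := by
    intro i hi; rw [mem_supp] at hi
    by_contra hc
    simp only [Finset.mem_union, not_or] at hc
    have h1 := supp_zero_outside hc.1
    have h2 := supp_zero_outside hc.2
    exact hi (by simp [hs, h1, h2])
  have hds : supp d ⊆ supp u ∪ supp w := by
    intro i hi; rw [mem_supp] at hi
    by_contra hc
    simp only [Finset.mem_union, not_or] at hc
    have h1 := supp_zero_outside hc.1
    have h2 := supp_zero_outside hc.2
    exact hi (by simp [hd, h1, h2])
  have hcard_union : (supp u ∪ supp w).card ≤ m := by
    calc (supp u ∪ supp w).card ≤ (supp u).card + (supp w).card := Finset.card_union_le _ _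
      _ ≤ m := hcard
  have hssp : sparse m s := le_trans (Finset.card_le_card hss) hcard_union
  have hdsp : sparse m d := le_trans (Finset.card_le_card hds) hcard_union
  have huw : u ⬝ᵥ w = 0 := dotp_disjoint_supp hdisj
  -- norms of s and d
  have hnorm_s : enormR s ^ 2 = 2 * a^2 * b^2 := by
    rw [enormR_sq_eq_dot, hs]
    simp only [add_dotProduct, dotProduct_add, smul_dotProduct,
      dotProduct_smul, smul_eq_mul]
    rw [dotProduct_comm w u] at *
    rw [← enormR_sq_eq_dot, ← enormR_sq_eq_dot, huw, ← ha, ← hb]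
    ring
  have hnorm_d : enormR d ^ 2 = 2 * a^2 * b^2 := by
    rw [enormR_sq_eq_dot, hd]
    simp only [sub_dotProduct, dotProduct_sub, smul_dotProduct,
      dotProduct_smul, smul_eq_mul]
    rw [dotProduct_comm w u] at *
    rw [← enormR_sq_eq_dot, ← enormR_sq_eq_dot, huw, ← ha, ← hb]
    ring
  -- polarization
  have hAs : A.mulVec s = b • A.mulVec u + a • A.mulVec w := by
    rw [hs, Matrix.mulVec_add, Matrix.mulVec_smul, Matrix.mulVec_smul]
  have hAd : A.mulVec d = b • A.mulVec u - a • A.mulVec w := by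
    rw [hd, Matrix.mulVec_sub, Matrix.mulVec_smul, Matrix.mulVec_smul]
  have hpol : enormR (A.mulVec s)^2 - enormR (A.mulVec d)^2
      = 4 * a * b * ((A.mulVec u) ⬝ᵥ (A.mulVec w)) := by
    rw [enormR_sq_eq_dot, enormR_sq_eq_dot, hAs, hAd]
    simp only [add_dotProduct, dotProduct_add, sub_dotProduct,
      dotProduct_sub, smul_dotProduct, dotProduct_smul, smul_eq_mul]
    rw [dotProduct_comm (A.mulVec w) (A.mulVec u)]
    ring
  have hub := (h s hssp).2
  have hlb := (h d hdsp).1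
  have hub' := (h d hdsp).2
  have hlb' := (h s hssp).1
  have key1 : 4 * a * b * ((A.mulVec u) ⬝ᵥ (A.mulVec w)) ≤ (L + U) * (2 * a^2 * b^2) := by
    rw [← hpol]
    have := hub
    rw [hnorm_s] at hub
    rw [hnorm_d] at hlb
    linarith
  have key2 : -((L + U) * (2 * a^2 * b^2)) ≤ 4 * a * b * ((A.mulVec u) ⬝ᵥ (A.mulVec w)) := by
    rw [← hpol]
    rw [hnorm_d] at hub'
    rw [hnorm_s] at hlb'
    linarith
  have h4ab : (0:ℝ) < 4*a*b := by positivity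
  set X := (A.mulVec u) ⬝ᵥ (A.mulVec w) with hX
  rw [abs_le]
  constructor
  · have k2 : (4*a*b) * (-(((L+U)/2)*a*b)) ≤ (4*a*b) * X := by
      rw [show (4*a*b) * X = 4*a*b*X by ring,
        show (4*a*b) * (-(((L+U)/2)*a*b)) = -((L+U)*(2*a^2*b^2)) by ring]
      exact key2
    have := (mul_le_mul_iff_of_pos_left h4ab).mp k2
    linarith [this]
  · have k1 : (4*a*b) * X ≤ (4*a*b) * (((L+U)/2)*a*b) := by
      rw [show (4*a*b) * X = 4*a*b*X by ring,
        show (4*a*b) * (((L+U)/2)*a*b) = (L+U)*(2*a^2*b^2) by ring]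
      exact key1
    have := (mul_le_mul_iff_of_pos_left h4ab).mp k1
    linarith [this]

end rip

-- ########## adjoint restriction bounds ##########
section adj
variable {n N : ℕ} {A : Matrix (Fin n) (Fin N) ℝ}

lemma restr_dot (S : Finset (Fin N)) (z : Fin N → ℝ) :
    (restr S z) ⬝ᵥ z = enormR (restr S z) ^ 2 := by
  rw [enormR_sq]
  apply Finset.sum_congr rfl
  intro i _
  by_cases h : i ∈ S <;> simp [restr, h, sq]

lemma norm_restr_adj_le {C : ℝ} (hC0 : 0 ≤ C) (S : Finset (Fin N)) (z : Fin n → ℝ)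
    (hC : ∀ w : Fin N → ℝ, supp w ⊆ S → (A.mulVec w) ⬝ᵥ z ≤ C * enormR w) :
    enormR (restr S (Aᵀ.mulVec z)) ≤ C := by
  set g := restr S (Aᵀ.mulVec z) with hg
  have h1 : enormR g ^ 2 = (A.mulVec g) ⬝ᵥ z := by
    rw [adjoint_dot, ← restr_dot S (Aᵀ.mulVec z)]
  have h2 : enormR g ^2 ≤ C * enormR g := h1 ▸ hC g (supp_restr _ _)
  rcases eq_or_lt_of_le (enormR_nonneg' g) with h0 | h0
  · rw [← h0]; exact hC0
  · have h2' : enormR g * enormR g ≤ C * enormR g := by rw [← pow_two]; exact h2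
    exact (mul_le_mul_iff_of_pos_right h0).mp h2'

lemma adj_err_bound {m : ℕ} {L U : ℝ} (hU : 0 ≤ U) (h : aRIP A m L U)
    {S : Finset (Fin N)} (hS : S.card ≤ m) (e : Fin n → ℝ) :
    enormR (restr S (Aᵀ.mulVec e)) ≤ Real.sqrt (1 + U) * enormR e := by
  apply norm_restr_adj_le (mul_nonneg (Real.sqrt_nonneg _) (enormR_nonneg' _))
  intro w hw
  have hsp : sparse m w := le_trans (Finset.card_le_card hw) hS
  calc (A.mulVec w) ⬝ᵥ e ≤ enormR (A.mulVec w) * enormR e := dotp_le_enorm _ _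
    _ ≤ (Real.sqrt (1+U) * enormR w) * enormR e :=
        mul_le_mul_of_nonneg_right (rip_upper hU h hsp) (enormR_nonneg' _)
    _ = Real.sqrt (1+U) * enormR e * enormR w := by ring

lemma adj_img_bound {m : ℕ} {L U : ℝ} (hLU : 0 ≤ L + U) (h : aRIP A m L U)
    {S : Finset (Fin N)} {r : Fin N → ℝ} (hdisj : Disjoint S (supp r))
    (hcard : S.card + (supp r).card ≤ m) :
    enormR (restr S (Aᵀ.mulVec (A.mulVec r))) ≤ ((L + U) / 2) * enormR r := by
  apply norm_restr_adj_le (mul_nonneg (by linarith) (enormR_nonneg' _))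
  intro w hw
  have hd : Disjoint (supp w) (supp r) :=
    Finset.disjoint_left.2 fun i hi => Finset.disjoint_left.1 hdisj (hw hi)
  have hc : (supp w).card + (supp r).card ≤ m :=
    le_trans (Nat.add_le_add_right (Finset.card_le_card hw) _) hcard
  calc (A.mulVec w) ⬝ᵥ (A.mulVec r) ≤ |(A.mulVec w) ⬝ᵥ (A.mulVec r)| := le_abs_self _
    _ ≤ ((L+U)/2) * enormR w * enormR r := rip_disjoint_dot h hd hc
    _ = ((L+U)/2) * enormR r * enormR w := by ring

end adj

-- ########## least squares / normal equations ##########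

section ls
variable {n N : ℕ} (A : Matrix (Fin n) (Fin N) ℝ) (I : Finset (Fin N))

/-- extension of a vector indexed by I to a vector on Fin N -/
noncomputable def extI (z : {x // x ∈ I} → ℝ) : Fin N → ℝ :=
  fun i => if h : i ∈ I then z ⟨i, h⟩ else 0

lemma supp_extI (z : {x // x ∈ I} → ℝ) : supp (extI I z) ⊆ I := by
  intro i hi; rw [mem_supp] at hi
  by_contra h; exact hi (by simp [extI, h])

lemma extI_eq_zero {z : {x // x ∈ I} → ℝ} (h : extI I z = 0) : z = 0 := by
  funext c
  have := congrFun h (c : Fin N)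
  simpa [extI, c.2] using this

lemma mulVec_subCols (z : {x // x ∈ I} → ℝ) :
    (subCols A I).mulVec z = A.mulVec (extI I z) := by
  funext r
  show ∑ c : I, subCols A I r c * z c = ∑ j, A r j * extI I z j
  rw [show ∑ c : I, subCols A I r c * z c
      = ∑ c : I, (fun j => A r j * extI I z j) (c : Fin N) from
    Finset.sum_congr rfl fun c _ => by simp [subCols, extI, c.2]]
  rw [Finset.sum_coe_sort I (fun j => A r j * extI I z j)]
  apply Finset.sum_subset (Finset.subset_univ I)
  intro j _ hj
  simp [extI, hj]

lemma adjoint_dot' {m p : Type*} [Fintype m] [Fintype p] (M : Matrix m p ℝ)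
    (w : p → ℝ) (z : m → ℝ) : (M.mulVec w) ⬝ᵥ z = w ⬝ᵥ (Mᵀ.mulVec z) := by
  rw [Matrix.mulVec_transpose]
  rw [dotProduct_comm, Matrix.dotProduct_mulVec, dotProduct_comm]

lemma col_adj (u : Fin n → ℝ) (i : Fin N) (h : i ∈ I) :
    (Aᵀ.mulVec u) i = ((subCols A I)ᵀ.mulVec u) ⟨i, h⟩ := by
  simp [Matrix.mulVec, Matrix.transpose, subCols, dotProduct]

lemma gram_det_ne_zero {m : ℕ} {L U : ℝ} (hL : L < 1) (h : aRIP A m L U)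
    (hI : I.card ≤ m) : (gram A I).det ≠ 0 := by
  intro hdet
  obtain ⟨c, hc, hGc⟩ := (Matrix.exists_mulVec_eq_zero_iff).2 hdet
  apply hc
  have hdot : c ⬝ᵥ (gram A I).mulVec c = enormR (A.mulVec (extI I c)) ^ 2 := by
    rw [_root_.gram, ← Matrix.mulVec_mulVec, ← adjoint_dot', mulVec_subCols, ← enormR_sq_eq_dot]
  rw [hGc] at hdot
  have h0 : (0:ℝ) = enormR (A.mulVec (extI I c))^2 := by
    rw [← hdot]; simp
  have hsp : sparse m (extI I c) :=
    le_trans (Finset.card_le_card (supp_extI I c)) hI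
  have hlow := (h _ hsp).1
  have : enormR (extI I c) = 0 := by
    by_contra hne
    have hpos : 0 < enormR (extI I c) := lt_of_le_of_ne (enormR_nonneg' _) (Ne.symm hne)
    have := mul_pos (show (0:ℝ) < 1 - L by linarith) (pow_pos hpos 2)
    linarith
  exact extI_eq_zero I (enormR_eq_zero this)

lemma normal_eq {m : ℕ} {L U : ℝ} (hL : L < 1) (h : aRIP A m L U)
    (hI : I.card ≤ m) (y : Fin n → ℝ) :
    ∀ i ∈ I, (Aᵀ.mulVec (y - A.mulVec (pinvVec A I y))) i = 0 := by
  intro i hi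
  set B := subCols A I with hB
  set G := gram A I with hG
  have hdet : IsUnit G.det := (gram_det_ne_zero A I hL h hI).isUnit
  have hGG : G * G⁻¹ = 1 := Matrix.mul_nonsing_inv _ hdet
  have hpe : pinvVec A I y = extI I (pinvApply A I y) := rfl
  have hAx : A.mulVec (pinvVec A I y) = B.mulVec (pinvApply A I y) := by
    rw [hpe, ← mulVec_subCols]
  have key : Bᵀ.mulVec (A.mulVec (pinvVec A I y)) = Bᵀ.mulVec y := by
    rw [hAx, Matrix.mulVec_mulVec]
    have e1 : Bᵀ * B = G := rfl
    have e2 : pinvApply A I y = (G⁻¹ * Bᵀ).mulVec y := rfl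
    rw [e2, Matrix.mulVec_mulVec, e1, ← Matrix.mul_assoc, hGG,
      Matrix.one_mul]
  have hsub : Aᵀ.mulVec (y - A.mulVec (pinvVec A I y))
      = Aᵀ.mulVec y - Aᵀ.mulVec (A.mulVec (pinvVec A I y)) := by
    rw [Matrix.mulVec_sub]
  rw [hsub]
  show (Aᵀ.mulVec y) i - (Aᵀ.mulVec (A.mulVec (pinvVec A I y))) i = 0
  rw [col_adj A I y i hi, col_adj A I _ i hi, key]
  ring

lemma supp_pinvVec (y : Fin n → ℝ) : supp (pinvVec A I y) ⊆ I := supp_extI I _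

end ls

-- ########## estimation lemma ##########
section est
variable {n N : ℕ} {A : Matrix (Fin n) (Fin N) ℝ}

lemma estimation {m₃ m₄ : ℕ} {L₃ U₃ L₄ U₄ : ℝ}
    (hL₄0 : 0 ≤ L₄) (hU₄0 : 0 ≤ U₄) (hL₃1 : L₃ < 1)
    (h₃ : aRIP A m₃ L₃ U₃) (h₄ : aRIP A m₄ L₄ U₄)
    (T : Finset (Fin N)) (hT3 : T.card ≤ m₃)
    (x : Fin N → ℝ) (e : Fin n → ℝ) (hT4 : T.card + (supp x).card ≤ m₄) :
    enormR (x - pinvVec A T (A.mulVec x + e)) ≤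
      (1 + (L₄ + U₄) / (2 * (1 - L₃))) * enormR (coRestr T x)
        + enormR e / Real.sqrt (1 - L₃) := by
  set y : Fin n → ℝ := A.mulVec x + e with hy
  set xt := pinvVec A T y with hxt
  set w := restr T (x - xt) with hw
  set co := coRestr T (x - xt) with hco
  have hs3pos : (0:ℝ) < Real.sqrt (1 - L₃) := Real.sqrt_pos.2 (by linarith)
  have hs3sq : Real.sqrt (1 - L₃) ^ 2 = 1 - L₃ := Real.sq_sqrt (by linarith)
  -- co equals coRestr T x
  have hco_eq : co = coRestr T x := by
    funext i
    by_cases hi : i ∈ T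
    · simp [hco, coRestr, hi]
    · have : xt i = 0 := by
        by_contra hne
        exact hi (supp_pinvVec A T y (mem_supp.2 hne))
      simp [hco, coRestr, hi, Pi.sub_apply, this]
  have hsplit : w + co = x - xt := restr_add_coRestr T (x - xt)
  -- support facts
  have hsw : supp w ⊆ T := supp_restr _ _
  have hsw3 : sparse m₃ w := le_trans (Finset.card_le_card hsw) hT3
  have hsco : supp co ⊆ supp x \ T := hco_eq ▸ supp_coRestr T x
  have hdisj : Disjoint (supp w) (supp co) := by
    rw [Finset.disjoint_left]
    intro i hi hic
    exact (Finset.mem_sdiff.1 (hsco hic)).2 (hsw hi)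
  have hcards : (supp w).card + (supp co).card ≤ m₄ := by
    have h1 : (supp w).card ≤ T.card := Finset.card_le_card hsw
    have h2 : (supp co).card ≤ (supp x).card :=
      Finset.card_le_card (fun i hi => (Finset.mem_sdiff.1 (hsco hi)).1)
    omega
  -- normal equations: the inner product of A w with the residual is zero
  have hNE := normal_eq A T hL₃1 h₃ hT3 y
  have hzero : (A.mulVec w) ⬝ᵥ (y - A.mulVec xt) = 0 := by
    rw [adjoint_dot]
    apply Finset.sum_eq_zero
    intro i _
    by_cases hi : i ∈ T
    · rw [hNE i hi, mul_zero]
    · have : w i = 0 := by simp [hw, restr, hi]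
      rw [this, zero_mul]
  -- main energy estimate
  have hAsplit : A.mulVec (x - xt) = A.mulVec w + A.mulVec co := by
    rw [← hsplit, Matrix.mulVec_add]
  have hyx : A.mulVec x = y - e := by rw [hy]; funext i; simp
  have hA1 : (A.mulVec w) ⬝ᵥ (A.mulVec (x - xt))
      = enormR (A.mulVec w) ^ 2 + (A.mulVec w) ⬝ᵥ (A.mulVec co) := by
    rw [hAsplit, dotProduct_add, enormR_sq_eq_dot]
  have hA2 : (A.mulVec w) ⬝ᵥ (A.mulVec (x - xt))
      = - ((A.mulVec w) ⬝ᵥ e) := by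
    have : A.mulVec (x - xt) = (y - A.mulVec xt) - e := by
      rw [Matrix.mulVec_sub, hyx]; funext i; simp; ring
    rw [this, dotProduct_sub, hzero]; ring
  have hEq : enormR (A.mulVec w) ^ 2
      = - ((A.mulVec w) ⬝ᵥ e) - (A.mulVec w) ⬝ᵥ (A.mulVec co) := by
    rw [← hA2, hA1]; ring
  have hb1 : |(A.mulVec w) ⬝ᵥ e| ≤ enormR (A.mulVec w) * enormR e := abs_dotp_le_enorm _ _
  have hb2 : |(A.mulVec w) ⬝ᵥ (A.mulVec co)| ≤ ((L₄+U₄)/2) * enormR w * enormR co :=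
    rip_disjoint_dot h₄ hdisj hcards
  have hlow : Real.sqrt (1 - L₃) * enormR w ≤ enormR (A.mulVec w) := rip_lower hL₃1 h₃ hsw3
  -- derive bound on enormR w
  have hwbound : enormR w ≤ enormR e / Real.sqrt (1 - L₃)
      + ((L₄+U₄)/(2*(1-L₃))) * enormR co := by
    set q := enormR (A.mulVec w) with hq
    have hq0 : 0 ≤ q := enormR_nonneg' _
    rcases eq_or_lt_of_le hq0 with h0 | h0
    · -- q = 0 forces w = 0
      have hwz : enormR w = 0 := by
        have := hlow
        rw [← h0] at this
        have hge := enormR_nonneg' w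
        nlinarith
      rw [hwz]
      have : 0 ≤ enormR e / Real.sqrt (1-L₃) := div_nonneg (enormR_nonneg' _) (le_of_lt hs3pos)
      have hco0 : 0 ≤ ((L₄+U₄)/(2*(1-L₃))) * enormR co :=
        mul_nonneg (div_nonneg (by linarith) (by linarith)) (enormR_nonneg' _)
      linarith
    · -- divide by q
      have hq2 : q ^ 2 ≤ q * enormR e + ((L₄+U₄)/2) * enormR w * enormR co := by
        rw [hq, hEq]
        have := abs_le.1 hb1
        have := abs_le.1 hb2
        linarith [(abs_le.1 hb1).1, (abs_le.1 hb2).1]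
      have hwq : enormR w ≤ q / Real.sqrt (1-L₃) := by
        rw [le_div_iff₀ hs3pos]; linarith [hlow]
      have hq3 : q ^2 ≤ q * enormR e + ((L₄+U₄)/2) * (q / Real.sqrt (1-L₃)) * enormR co := by
        have hc : 0 ≤ ((L₄+U₄)/2) * enormR co := mul_nonneg (by linarith) (enormR_nonneg' _)
        nlinarith [mul_le_mul_of_nonneg_right hwq hc]
      have hq4 : q ≤ enormR e + ((L₄+U₄)/2) * (enormR co / Real.sqrt (1-L₃)) := by
        have hh : q * q ≤ q * (enormR e + ((L₄+U₄)/2) * (enormR co / Real.sqrt (1-L₃))) := by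
          calc q * q = q^2 := by ring
            _ ≤ q * enormR e + ((L₄+U₄)/2) * (q / Real.sqrt (1-L₃)) * enormR co := hq3
            _ = q * (enormR e + ((L₄+U₄)/2) * (enormR co / Real.sqrt (1-L₃))) := by
                field_simp
        exact (mul_le_mul_iff_of_pos_left h0).mp hh
      calc enormR w ≤ q / Real.sqrt (1-L₃) := hwq
        _ ≤ (enormR e + ((L₄+U₄)/2) * (enormR co / Real.sqrt (1-L₃))) / Real.sqrt (1-L₃) :=
            by gcongr
        _ = enormR e / Real.sqrt (1-L₃) + ((L₄+U₄)/(2*(1-L₃))) * enormR co := by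
            have hss : Real.sqrt (1-L₃) * Real.sqrt (1-L₃) = 1 - L₃ := by
              exact Real.mul_self_sqrt (by linarith)
            have h1L : (1:ℝ) - L₃ ≠ 0 := by linarith
            rw [add_div, mul_div_assoc, div_div, hss]
            field_simp
  -- conclude
  have htri : enormR (x - xt) ≤ enormR w + enormR co := by
    rw [← hsplit]; exact enormR_add_le _ _
  rw [hco_eq] at hwbound htri
  calc enormR (x - xt) ≤ enormR w + enormR (coRestr T x) := htri
    _ ≤ (enormR e / Real.sqrt (1-L₃) + ((L₄+U₄)/(2*(1-L₃))) * enormR (coRestr T x))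
        + enormR (coRestr T x) := by linarith
    _ = (1 + (L₄+U₄)/(2*(1-L₃))) * enormR (coRestr T x) + enormR e / Real.sqrt (1-L₃) := by ring

end est

-- ########## identification and pruning ##########
section idpr
variable {n N : ℕ} {A : Matrix (Fin n) (Fin N) ℝ}

lemma restr_add (S : Finset (Fin N)) (u v : Fin N → ℝ) :
    restr S (u + v) = restr S u + restr S v := by
  funext i; by_cases h : i ∈ S <;> simp [restr, h]

lemma identification {m₂ m₄ : ℕ} {L₂ U₂ L₄ U₄ : ℝ}
    (hL₂0 : 0 ≤ L₂) (hU₂0 : 0 ≤ U₂) (hL₄0 : 0 ≤ L₄) (hU₄0 : 0 ≤ U₄) (hL₂1 : L₂ < 1)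
    (h₂ : aRIP A m₂ L₂ U₂) (h₄ : aRIP A m₄ L₄ U₄)
    {r : Fin N → ℝ} {e : Fin n → ℝ} {Ω : Finset (Fin N)}
    (hsel : selects Ω (Aᵀ.mulVec (A.mulVec r + e)))
    (hr2 : (supp r).card ≤ m₂) (hΩ2 : Ω.card ≤ m₂) (hrΩ : (supp r).card ≤ Ω.card)
    (h4c : Ω.card + (supp r).card ≤ m₄) :
    enormR (coRestr Ω r) ≤ ((L₂ + U₂ + L₄ + U₄) / (2 * (1 - L₂))) * enormR r
      + (2 * Real.sqrt (1 + U₂) / (1 - L₂)) * enormR e := by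
  set u := Aᵀ.mulVec (A.mulVec r + e) with hu
  set p := coRestr Ω r with hp
  set q := restr Ω r with hq
  have hpq : q + p = r := restr_add_coRestr Ω r
  have hsp : supp p ⊆ supp r \ Ω := supp_coRestr Ω r
  have hsq1 : supp q ⊆ Ω := supp_restr Ω r
  have hsq2 : supp q ⊆ supp r := supp_restr' Ω r
  have hcard_split : (supp r ∩ Ω).card + (supp r \ Ω).card = (supp r).card :=
    Finset.card_inter_add_card_sdiff _ _
  have hp2 : sparse m₂ p :=
    le_trans (Finset.card_le_card (fun i hi => (Finset.mem_sdiff.1 (hsp hi)).1)) hr2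
  -- RHS nonnegativity pieces
  have h1L : (0:ℝ) < 1 - L₂ := by linarith
  have hRHS0 : 0 ≤ ((L₂ + U₂ + L₄ + U₄) / (2 * (1 - L₂))) * enormR r
      + (2 * Real.sqrt (1 + U₂) / (1 - L₂)) * enormR e := by
    have := enormR_nonneg' r; have := enormR_nonneg' e
    have : (0:ℝ) ≤ (L₂+U₂+L₄+U₄)/(2*(1-L₂)) := div_nonneg (by linarith) (by linarith)
    positivity
  rcases eq_or_lt_of_le (enormR_nonneg' p) with hp0 | hp0
  · rw [← hp0]; exact hRHS0
  -- energy estimate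
  have hlow : (1 - L₂) * enormR p ^ 2 ≤ enormR (A.mulVec p) ^ 2 := (h₂ p hp2).1
  have hsplitA : A.mulVec r = A.mulVec q + A.mulVec p := by
    rw [← hpq, Matrix.mulVec_add]
  have hB : enormR (A.mulVec p) ^ 2
      = (A.mulVec p) ⬝ᵥ (A.mulVec r) - (A.mulVec p) ⬝ᵥ (A.mulVec q) := by
    rw [hsplitA, dotProduct_add, enormR_sq_eq_dot]; ring
  -- step C
  have hdisj_pq : Disjoint (supp p) (supp q) := by
    rw [Finset.disjoint_left]
    intro i hi hiq
    exact (Finset.mem_sdiff.1 (hsp hi)).2 (hsq1 hiq)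
  have hcards_pq : (supp p).card + (supp q).card ≤ m₂ := by
    have h1 : (supp p).card ≤ (supp r \ Ω).card := Finset.card_le_card hsp
    have h2 : (supp q).card ≤ (supp r ∩ Ω).card := by
      apply Finset.card_le_card
      intro i hi
      exact Finset.mem_inter.2 ⟨hsq2 hi, hsq1 hi⟩
    omega
  have hC : |(A.mulVec p) ⬝ᵥ (A.mulVec q)| ≤ ((L₂+U₂)/2) * enormR p * enormR r := by
    calc |(A.mulVec p) ⬝ᵥ (A.mulVec q)| ≤ ((L₂+U₂)/2) * enormR p * enormR q :=
          rip_disjoint_dot h₂ hdisj_pq hcards_pq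
      _ ≤ ((L₂+U₂)/2) * enormR p * enormR r := by
          apply mul_le_mul_of_nonneg_left (enormR_restr_le Ω r)
          have := enormR_nonneg' p
          positivity
  -- step D/E
  have hD : (A.mulVec p) ⬝ᵥ (A.mulVec r) = p ⬝ᵥ u - (A.mulVec p) ⬝ᵥ e := by
    rw [hu, ← adjoint_dot, dotProduct_add]; ring
  set P := supp r \ Ω with hP
  set Q := Ω \ supp r with hQ
  have hE : p ⬝ᵥ u = p ⬝ᵥ restr P u := by
    apply Finset.sum_congr rfl
    intro i _
    by_cases hiP : i ∈ P
    · simp [restr, hiP]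
    · have : p i = 0 := by
        by_contra hne
        exact hiP (hsp (mem_supp.2 hne))
      simp [this]
  have hE2 : p ⬝ᵥ restr P u ≤ enormR p * enormR (restr P u) := dotp_le_enorm _ _
  -- step F
  have hPQ : P.card ≤ Q.card := by
    show (supp r \ Ω).card ≤ (Ω \ supp r).card
    have h1 := Finset.card_inter_add_card_sdiff (supp r) Ω
    have h2 := Finset.card_inter_add_card_sdiff Ω (supp r)
    have h3 : (supp r ∩ Ω).card = (Ω ∩ supp r).card := by rw [Finset.inter_comm]
    omega
  have hF : enormR (restr P u) ≤ enormR (restr Q u) := by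
    apply selects_swap hsel _ (Finset.sdiff_subset) hPQ
    rw [Finset.disjoint_left]
    intro i hi
    exact (Finset.mem_sdiff.1 hi).2
  -- step G/H/I
  have hG : enormR (restr Q u) ≤ ((L₄+U₄)/2) * enormR r + Real.sqrt (1+U₂) * enormR e := by
    have hu2 : u = Aᵀ.mulVec (A.mulVec r) + Aᵀ.mulVec e := by
      rw [hu, Matrix.mulVec_add]
    have hdisjQ : Disjoint Q (supp r) := by
      rw [Finset.disjoint_left]; intro i hi; exact (Finset.mem_sdiff.1 hi).2
    have hcQ4 : Q.card + (supp r).card ≤ m₄ :=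
      le_trans (Nat.add_le_add_right (Finset.card_le_card Finset.sdiff_subset) _) h4c
    have hcQ2 : Q.card ≤ m₂ :=
      le_trans (Finset.card_le_card Finset.sdiff_subset) hΩ2
    calc enormR (restr Q u)
        = enormR (restr Q (Aᵀ.mulVec (A.mulVec r)) + restr Q (Aᵀ.mulVec e)) := by
          rw [← restr_add, ← hu2]
      _ ≤ enormR (restr Q (Aᵀ.mulVec (A.mulVec r))) + enormR (restr Q (Aᵀ.mulVec e)) :=
          enormR_add_le _ _
      _ ≤ ((L₄+U₄)/2) * enormR r + Real.sqrt (1+U₂) * enormR e := by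
          have := adj_img_bound (by linarith : (0:ℝ) ≤ L₄ + U₄) h₄ hdisjQ hcQ4
          have := adj_err_bound hU₂0 h₂ hcQ2 e
          gcongr <;> assumption
  -- step J
  have hJ : |(A.mulVec p) ⬝ᵥ e| ≤ Real.sqrt (1+U₂) * enormR p * enormR e := by
    calc |(A.mulVec p) ⬝ᵥ e| ≤ enormR (A.mulVec p) * enormR e := abs_dotp_le_enorm _ _
      _ ≤ (Real.sqrt (1+U₂) * enormR p) * enormR e :=
          mul_le_mul_of_nonneg_right (rip_upper hU₂0 h₂ hp2) (enormR_nonneg' _)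
      _ = Real.sqrt (1+U₂) * enormR p * enormR e := by ring
  -- combine
  have hcomb : (1 - L₂) * enormR p ^ 2
      ≤ enormR p * (((L₄+U₄)/2) * enormR r + Real.sqrt (1+U₂) * enormR e)
        + Real.sqrt (1+U₂) * enormR p * enormR e + ((L₂+U₂)/2) * enormR p * enormR r := by
    have hEbound : p ⬝ᵥ u ≤ enormR p * (((L₄+U₄)/2) * enormR r + Real.sqrt (1+U₂) * enormR e) := by
      calc p ⬝ᵥ u = p ⬝ᵥ restr P u := hE
        _ ≤ enormR p * enormR (restr P u) := hE2
        _ ≤ enormR p * enormR (restr Q u) :=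
            mul_le_mul_of_nonneg_left hF (enormR_nonneg' _)
        _ ≤ enormR p * (((L₄+U₄)/2) * enormR r + Real.sqrt (1+U₂) * enormR e) :=
            mul_le_mul_of_nonneg_left hG (enormR_nonneg' _)
    have e1 := (abs_le.1 hC).1
    have e2 := (abs_le.1 hJ).1
    calc (1 - L₂) * enormR p ^ 2 ≤ enormR (A.mulVec p)^2 := hlow
      _ = (A.mulVec p) ⬝ᵥ (A.mulVec r) - (A.mulVec p) ⬝ᵥ (A.mulVec q) := hB
      _ = p ⬝ᵥ u - (A.mulVec p) ⬝ᵥ e - (A.mulVec p) ⬝ᵥ (A.mulVec q) := by rw [hD]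
      _ ≤ _ := by linarith
  -- divide by enormR p and (1 - L₂)
  have hdiv : (1 - L₂) * enormR p
      ≤ ((L₂+U₂+L₄+U₄)/2) * enormR r + 2 * Real.sqrt (1+U₂) * enormR e := by
    have hh : ((1 - L₂) * enormR p) * enormR p
        ≤ (((L₂+U₂+L₄+U₄)/2) * enormR r + 2 * Real.sqrt (1+U₂) * enormR e) * enormR p := by
      calc ((1 - L₂) * enormR p) * enormR p = (1 - L₂) * enormR p ^2 := by ring
        _ ≤ _ := hcomb
        _ = (((L₂+U₂+L₄+U₄)/2) * enormR r + 2 * Real.sqrt (1+U₂) * enormR e) * enormR p := by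
            ring
    exact (mul_le_mul_iff_of_pos_right hp0).mp hh
  have hfinal : enormR p
      ≤ (((L₂+U₂+L₄+U₄)/2) * enormR r + 2 * Real.sqrt (1+U₂) * enormR e) / (1 - L₂) := by
    rw [le_div_iff₀ h1L]
    calc enormR p * (1 - L₂) = (1 - L₂) * enormR p := by ring
      _ ≤ _ := hdiv
  calc enormR p ≤ _ := hfinal
    _ = ((L₂ + U₂ + L₄ + U₄) / (2 * (1 - L₂))) * enormR r
        + (2 * Real.sqrt (1 + U₂) / (1 - L₂)) * enormR e := by
      field_simp

lemma pruning {x xt : Fin N → ℝ} {T : Finset (Fin N)}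
    (hx : (supp x).card ≤ T.card) (hsel : selects T xt) :
    enormR (x - restr T xt) ≤ 2 * enormR (x - xt) := by
  set S := supp x with hS
  set z := x - restr T xt with hz
  have hzr : restr T z = restr T (x - xt) := by
    funext i; by_cases h : i ∈ T <;> simp [restr, hz, h]
  have hzc : coRestr T z = coRestr T x := by
    funext i; by_cases h : i ∈ T <;> simp [coRestr, restr, hz, h]
  set a := enormR (restr T (x - xt)) with ha
  set b := enormR (restr (S \ T) (x - xt)) with hb
  set c := enormR (restr (T \ S) (x - xt)) with hc
  have ha0 : 0 ≤ a := enormR_nonneg' _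
  have hb0 : 0 ≤ b := enormR_nonneg' _
  have hc0 : 0 ≤ c := enormR_nonneg' _
  -- coRestr T x = restr (S \ T) x
  have hcx : coRestr T x = restr (S \ T) x := by
    funext i
    by_cases hiT : i ∈ T
    · simp [coRestr, restr, hiT, Finset.mem_sdiff]
    · by_cases hiS : i ∈ S
      · simp [coRestr, restr, hiT, Finset.mem_sdiff, hiS]
      · have hx0 : x i = 0 := supp_zero_outside (by rwa [← hS])
        simp [coRestr, restr, hiT, Finset.mem_sdiff, hiS, hx0]
  -- bound on ‖coRestr T x‖
  have h1 : enormR (coRestr T x) ≤ b + c := by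
    have hsplit : restr (S \ T) x = restr (S \ T) (x - xt) + restr (S \ T) xt := by
      rw [← restr_add]; congr 1; funext i; simp
    have hswap : enormR (restr (S \ T) xt) ≤ enormR (restr (T \ S) xt) := by
      apply selects_swap hsel _ (Finset.sdiff_subset) ?_
      · rw [Finset.disjoint_left]; intro i hi; exact (Finset.mem_sdiff.1 hi).2
      · have h1 := Finset.card_inter_add_card_sdiff S T
        have h2 := Finset.card_inter_add_card_sdiff T S
        have h3 : (S ∩ T).card = (T ∩ S).card := by rw [Finset.inter_comm]
        omega
    have heq : restr (T \ S) xt = restr (T \ S) (xt - x) := by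
      funext i
      by_cases hi : i ∈ T \ S
      · have : x i = 0 := supp_zero_outside (by
          rw [← hS]; exact (Finset.mem_sdiff.1 hi).2)
        simp [restr, hi, this]
      · simp [restr, hi]
    have hneg : enormR (restr (T \ S) (xt - x)) = c := by
      rw [hc]
      have : restr (T \ S) (xt - x) = -(restr (T \ S) (x - xt)) := by
        funext i; by_cases hi : i ∈ T \ S <;> simp [restr, hi]
      rw [this, enormR_neg]
    calc enormR (coRestr T x) = enormR (restr (S \ T) x) := by rw [hcx]
      _ ≤ enormR (restr (S \ T) (x - xt)) + enormR (restr (S \ T) xt) := by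
          rw [hsplit]; exact enormR_add_le _ _
      _ ≤ b + c := by
          rw [← hb]
          have := hswap.trans (le_of_eq (heq ▸ hneg))
          linarith [hswap, heq ▸ hneg]
  have h2 : c ≤ a := enormR_restr_mono (Finset.sdiff_subset) _
  have h3 : a^2 + b^2 ≤ enormR (x - xt)^2 := by
    rw [ha, hb, enormR_sq_restr, enormR_sq_restr, enormR_sq]
    rw [← Finset.sum_union (by
      rw [Finset.disjoint_left]; intro i hi hi2; exact (Finset.mem_sdiff.1 hi2).2 hi)]
    exact Finset.sum_le_sum_of_subset_of_nonneg (Finset.subset_univ _)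
      fun i _ _ => sq_nonneg _
  have hpy : enormR z ^2 = a^2 + enormR (coRestr T x)^2 := by
    rw [pyth T z, hzr, hzc, ha]
  have hzsq : enormR z ^2 ≤ (2 * enormR (x - xt))^2 := by
    have hco2 : enormR (coRestr T x)^2 ≤ (b + c)^2 := by
      have := enormR_nonneg' (coRestr T x)
      nlinarith [h1]
    have : (b+c)^2 ≤ (b+a)^2 := by nlinarith
    nlinarith [hpy, h3]
  exact le_of_sq_le_sq' (enormR_nonneg' _)
    (by linarith [enormR_nonneg' (x - xt)]) hzsq

end idpr

-- ########## one step of CoSaMP ##########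
section onestep
variable {n N k : ℕ} {A : Matrix (Fin n) (Fin N) ℝ}

lemma one_step {L₂ U₂ L₃ U₃ L₄ U₄ : ℝ}
    (hL₂0 : 0 ≤ L₂) (hU₂0 : 0 ≤ U₂) (hL₃0 : 0 ≤ L₃) (hL₄0 : 0 ≤ L₄) (hU₄0 : 0 ≤ U₄)
    (h₂ : aRIP A (2 * k) L₂ U₂) (h₃ : aRIP A (3 * k) L₃ U₃) (h₄ : aRIP A (4 * k) L₄ U₄)
    (hL₂1 : L₂ < 1) (hL₃1 : L₃ < 1)
    {μ ξ : ℝ}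
    (hμ : μ = (1 / 2) * (2 + (L₄ + U₄) / (1 - L₃)) * ((L₂ + U₂ + L₄ + U₄) / (1 - L₂)))
    (hξ : ξ = 2 * ((2 + (L₄ + U₄) / (1 - L₃)) * (Real.sqrt (1 + U₂) / (1 - L₂))
      + (Real.sqrt (1 - L₃))⁻¹))
    {x : Fin N → ℝ} (hx : sparse k x) {e : Fin n → ℝ}
    {vcur : Fin N → ℝ} (hvcur : sparse k vcur)
    {Ω T : Finset (Fin N)}
    (hΩcard : Ω.card = 2 * k)
    (hΩsel : selects Ω (Aᵀ.mulVec (A.mulVec (x - vcur) + e)))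
    (hTcard : T.card = k)
    (hTsel : selects T (pinvVec A (supp vcur ∪ Ω) (A.mulVec x + e))) :
    enormR (x - restr T (pinvVec A (supp vcur ∪ Ω) (A.mulVec x + e)))
      ≤ μ * enormR (x - vcur) + ξ * enormR e := by
  set Tt := supp vcur ∪ Ω with hTt
  set xt := pinvVec A Tt (A.mulVec x + e) with hxt
  set r := x - vcur with hr
  have hs3pos : (0:ℝ) < Real.sqrt (1 - L₃) := Real.sqrt_pos.2 (by linarith)
  -- support cardinalities
  have hsuppr : supp r ⊆ supp x ∪ supp vcur := supp_sub x vcur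
  have hr2 : (supp r).card ≤ 2 * k := by
    have := Finset.card_le_card hsuppr
    have := Finset.card_union_le (supp x) (supp vcur)
    have hx' : (supp x).card ≤ k := hx
    have hv' : (supp vcur).card ≤ k := hvcur
    omega
  have hTt3 : Tt.card ≤ 3 * k := by
    have hcu := Finset.card_union_le (supp vcur) Ω
    rw [← hTt] at hcu
    have hv' : (supp vcur).card ≤ k := hvcur
    omega
  have hTt4 : Tt.card + (supp x).card ≤ 4 * k := by
    have hx' : (supp x).card ≤ k := hx
    omega
  -- identification
  have hid := identification hL₂0 hU₂0 hL₄0 hU₄0 hL₂1 h₂ h₄ hΩsel hr2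
    (le_of_eq hΩcard) (by omega) (by omega)
  -- estimation
  have hest := estimation hL₄0 hU₄0 hL₃1 h₃ h₄ Tt hTt3 x e (by omega)
  -- pruning
  have hprun : enormR (x - restr T xt) ≤ 2 * enormR (x - xt) := by
    apply pruning _ hTsel
    rw [hTcard]; exact hx
  -- link coRestr Tt x with coRestr Ω r
  have hlink : enormR (coRestr Tt x) ≤ enormR (coRestr Ω r) := by
    have heq : coRestr Tt x = coRestr Tt r := by
      funext i
      by_cases hi : i ∈ Tt
      · simp [coRestr, hi]
      · have hv0 : vcur i = 0 := by
          apply supp_zero_outside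
          intro hs
          exact hi (Finset.mem_union_left _ hs)
        simp [coRestr, hi, hr, Pi.sub_apply, hv0]
    rw [heq]
    exact enormR_coRestr_mono (Finset.subset_union_right) r
  -- assemble
  set d2 := (L₄ + U₄) / (2 * (1 - L₃)) with hd2
  have hd20 : 0 ≤ d2 := div_nonneg (by linarith) (by linarith)
  set α := (L₂ + U₂ + L₄ + U₄) / (2 * (1 - L₂)) with hα
  set β := Real.sqrt (1 + U₂) / (1 - L₂) with hβ
  have hco : enormR (coRestr Tt x) ≤ α * enormR r + 2 * β * enormR e := by
    calc enormR (coRestr Tt x) ≤ enormR (coRestr Ω r) := hlink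
      _ ≤ α * enormR r + (2 * Real.sqrt (1 + U₂) / (1 - L₂)) * enormR e := hid
      _ = α * enormR r + 2 * β * enormR e := by rw [hβ]; ring
  have hxxt : enormR (x - xt) ≤ (1 + d2) * (α * enormR r + 2 * β * enormR e)
      + enormR e / Real.sqrt (1 - L₃) := by
    calc enormR (x - xt) ≤ (1 + d2) * enormR (coRestr Tt x) + enormR e / Real.sqrt (1 - L₃) :=
          hest
      _ ≤ (1 + d2) * (α * enormR r + 2 * β * enormR e) + enormR e / Real.sqrt (1 - L₃) := by
          have := mul_le_mul_of_nonneg_left hco (by linarith : (0:ℝ) ≤ 1 + d2)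
          linarith
  calc enormR (x - restr T xt) ≤ 2 * enormR (x - xt) := hprun
    _ ≤ 2 * ((1 + d2) * (α * enormR r + 2 * β * enormR e)
        + enormR e / Real.sqrt (1 - L₃)) := by linarith
    _ = μ * enormR r + ξ * enormR e := by
        rw [hμ, hξ, hα, hβ, hd2]
        have hs3ne : Real.sqrt (1 - L₃) ≠ 0 := ne_of_gt hs3pos
        have hne3 : (1:ℝ) - L₃ ≠ 0 := by linarith
        have hne2 : (1:ℝ) - L₂ ≠ 0 := by linarith
        field_simp
        ring

end onestep


theorem stmt13 {n N k : ℕ} (A : Matrix (Fin n) (Fin N) ℝ)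
    (L₂ U₂ L₃ U₃ L₄ U₄ : ℝ)
    (hL₂0 : 0 ≤ L₂) (hU₂0 : 0 ≤ U₂) (hL₃0 : 0 ≤ L₃) (hU₃0 : 0 ≤ U₃)
    (hL₄0 : 0 ≤ L₄) (hU₄0 : 0 ≤ U₄)
    (h₂ : aRIP A (2 * k) L₂ U₂) (h₃ : aRIP A (3 * k) L₃ U₃) (h₄ : aRIP A (4 * k) L₄ U₄)
    (hL₂1 : L₂ < 1) (hL₃1 : L₃ < 1)
    (μ ξ : ℝ)
    (hμ : μ = (1 / 2) * (2 + (L₄ + U₄) / (1 - L₃)) * ((L₂ + U₂ + L₄ + U₄) / (1 - L₂)))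
    (hξ : ξ = 2 * ((2 + (L₄ + U₄) / (1 - L₃)) * (Real.sqrt (1 + U₂) / (1 - L₂))
      + (Real.sqrt (1 - L₃))⁻¹))
    (hμ1 : μ < 1)
    (x : Fin N → ℝ) (hx : sparse k x) (e y : Fin n → ℝ)
    (hy : y = fun i => A.mulVec x i + e i)
    (v : ℕ → Fin N → ℝ) (Ω Tt Ts : ℕ → Finset (Fin N)) (xt : ℕ → Fin N → ℝ)
    (hv0 : v 0 = 0)
    (hΩcard : ∀ l : ℕ, (Ω (l + 1)).card = 2 * k)
    (hΩsel : ∀ l : ℕ, selects (Ω (l + 1)) (Aᵀ.mulVec (fun i => y i - A.mulVec (v l) i)))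
    (hTt : ∀ l : ℕ, Tt (l + 1) = (Finset.univ.filter fun i => v l i ≠ 0) ∪ Ω (l + 1))
    (hxt : ∀ l : ℕ, xt (l + 1) = pinvVec A (Tt (l + 1)) y)
    (hTscard : ∀ l : ℕ, (Ts (l + 1)).card = k)
    (hTssel : ∀ l : ℕ, selects (Ts (l + 1)) (xt (l + 1)))
    (hvsucc : ∀ l : ℕ, v (l + 1) = restr (Ts (l + 1)) (xt (l + 1))) :
    ∀ l : ℕ, enormR (fun i => x i - v l i) ≤
      μ ^ l * enormR x + (ξ / (1 - μ)) * enormR e := by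
  have h1L₃ : (0:ℝ) < 1 - L₃ := by linarith
  have h1L₂ : (0:ℝ) < 1 - L₂ := by linarith
  have hd0 : 0 ≤ (L₄ + U₄) / (1 - L₃) := div_nonneg (by linarith) (by linarith)
  have hμ0 : 0 ≤ μ := by
    rw [hμ]
    exact mul_nonneg (mul_nonneg (by norm_num) (by linarith))
      (div_nonneg (by linarith) (by linarith))
  have hξ0 : 0 ≤ ξ := by
    rw [hξ]
    refine mul_nonneg (by norm_num) (add_nonneg (mul_nonneg (by linarith)
      (div_nonneg (Real.sqrt_nonneg _) h1L₂.le)) (inv_nonneg.2 (Real.sqrt_nonneg _)))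
  have h1μ : (0:ℝ) < 1 - μ := by linarith
  have hC0 : 0 ≤ (ξ / (1 - μ)) * enormR e :=
    mul_nonneg (div_nonneg hξ0 h1μ.le) (enormR_nonneg' e)
  -- sparsity of iterates
  have hvsp : ∀ l, sparse k (v l) := by
    intro l
    cases l with
    | zero =>
      rw [hv0]
      show (Finset.univ.filter fun i => (0 : Fin N → ℝ) i ≠ 0).card ≤ k
      simp
    | succ m =>
      rw [hvsucc m]
      exact le_trans (Finset.card_le_card (supp_restr _ _)) (le_of_eq (hTscard m))
  -- one-step bound
  have hy' : y = A.mulVec x + e := by rw [hy]; rfl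
  have hstep : ∀ l, enormR (x - v (l + 1)) ≤ μ * enormR (x - v l) + ξ * enormR e := by
    intro l
    have hTt' : Tt (l + 1) = supp (v l) ∪ Ω (l + 1) := hTt l
    have hΩsel' : selects (Ω (l + 1)) (Aᵀ.mulVec (A.mulVec (x - v l) + e)) := by
      have h := hΩsel l
      have heq : (fun i => y i - A.mulVec (v l) i) = A.mulVec (x - v l) + e := by
        rw [hy]
        funext i
        rw [Matrix.mulVec_sub]
        simp only [Pi.add_apply, Pi.sub_apply]
        ring
      rwa [heq] at h
    have hTsel' : selects (Ts (l + 1)) (pinvVec A (supp (v l) ∪ Ω (l + 1)) (A.mulVec x + e)) := by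
      have h := hTssel l
      rwa [hxt l, hTt', hy'] at h
    have hres := one_step hL₂0 hU₂0 hL₃0 hL₄0 hU₄0 h₂ h₃ h₄ hL₂1 hL₃1 hμ hξ hx
      (hvsp l) (hΩcard l) hΩsel' (hTscard l) hTsel'
    have hveq : v (l + 1) = restr (Ts (l + 1)) (pinvVec A (supp (v l) ∪ Ω (l + 1)) (A.mulVec x + e)) := by
      rw [hvsucc l, hxt l, hTt', hy']
    rw [hveq]
    exact hres
  -- induction
  intro l
  induction l with
  | zero =>
    have hx0 : (fun i => x i - v 0 i) = x := by
      rw [hv0]; funext i; simp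
    rw [hx0, pow_zero, one_mul]
    linarith
  | succ m ih =>
    have h1 := hstep m
    have hr1 : enormR (fun i => x i - v (m + 1) i) = enormR (x - v (m + 1)) := rfl
    have hr2 : enormR (fun i => x i - v m i) = enormR (x - v m) := rfl
    rw [hr2] at ih
    rw [hr1]
    have h2 : μ * enormR (x - v m) ≤ μ * (μ ^ m * enormR x + (ξ / (1 - μ)) * enormR e) :=
      mul_le_mul_of_nonneg_left ih hμ0
    have h3 : μ * (ξ / (1 - μ)) + ξ = ξ / (1 - μ) := by
      field_simp
      ring
    calc enormR (x - v (m + 1)) ≤ μ * enormR (x - v m) + ξ * enormR e := h1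
      _ ≤ μ * (μ ^ m * enormR x + (ξ / (1 - μ)) * enormR e) + ξ * enormR e := by linarith
      _ = μ ^ (m + 1) * enormR x + (μ * (ξ / (1 - μ)) + ξ) * enormR e := by ring
      _ = μ ^ (m + 1) * enormR x + (ξ / (1 - μ)) * enormR e := by rw [h3]
end
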